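/- Let δ ≥ 3, n ≥ 2δ² and s be integers with δ + 1 ≤ s ≤ (n−2)/(δ−1). Then ρ(K_s ∨ (K_{n−(δ−1)s−1} ∪ ((δ−2)s+1)K_1)) < ρ(K_δ ∨ (K_{n−δ(δ−1)−1} ∪ (δ(δ−2)+1)K_1)). -/

import Mathlib

open Finset

/-- The spectral radius of a finite simple graph: the largest eigenvalue of its
adjacency matrix (over `ℝ`). -/
noncomputable def specRad {V : Type*} [Fintype V] (G : SimpleGraph V) : ℝ :=
  letI := Classical.decEq V
  letI := Classical.decRel G.Adj
  sSup (spectrum ℝ (G.adjMatrix ℝ))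

/-- `joinCliques s t f` is the graph `K_s ∨ (K_{f 0} ∪ K_{f 1} ∪ ⋯ ∪ K_{f (t-1)})`. -/
def joinCliques (s t : ℕ) (f : Fin t → ℕ) :
    SimpleGraph (Fin s ⊕ (Σ i : Fin t, Fin (f i))) where
  Adj x y := x ≠ y ∧ ∀ a b, x = Sum.inr a → y = Sum.inr b → a.1 = b.1
  symm := ⟨fun _x _y h => ⟨h.1.symm, fun a b hy hx => (h.2 b a hx hy).symm⟩⟩
  loopless := ⟨fun _x h => h.1 rfl⟩

/-- `gJoin s m t p` is the graph `K_s ∨ (K_m ∪ t·K_p)`. -/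
def gJoin (s m t p : ℕ) :=
  joinCliques s (t + 1) (Fin.cons m fun _ => p)



lemma specRad_eq' {V : Type*} [Fintype V] (G : SimpleGraph V) [DecidableEq V]
    [DecidableRel G.Adj] :
    specRad G = sSup (spectrum ℝ (G.adjMatrix ℝ)) := by
  unfold specRad
  have h1 : Classical.decEq V = ‹DecidableEq V› := Subsingleton.elim _ _
  have h2 : Classical.decRel G.Adj = ‹DecidableRel G.Adj› := Subsingleton.elim _ _
  rw [h1, h2]

lemma adjMatrix_nonneg {V : Type*} [Fintype V] (G : SimpleGraph V) [DecidableRel G.Adj]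
    (i j : V) : 0 ≤ G.adjMatrix ℝ i j := by
  rw [SimpleGraph.adjMatrix_apply]; split <;> norm_num

lemma adjMatrix_le_one {V : Type*} [Fintype V] (G : SimpleGraph V) [DecidableRel G.Adj]
    (i j : V) : G.adjMatrix ℝ i j ≤ 1 := by
  rw [SimpleGraph.adjMatrix_apply]; split <;> norm_num

lemma eigen_of_mem_spectrum {V : Type*} [Fintype V] [DecidableEq V]
    (A : Matrix V V ℝ) (μ : ℝ) (hμ : μ ∈ spectrum ℝ A) :
    ∃ v : V → ℝ, v ≠ 0 ∧ A.mulVec v = μ • v := by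
  rw [spectrum.mem_iff, Matrix.isUnit_iff_isUnit_det, isUnit_iff_ne_zero, not_ne_iff] at hμ
  obtain ⟨v, hv0, hv⟩ := Matrix.exists_mulVec_eq_zero_iff.mpr hμ
  refine ⟨v, hv0, ?_⟩
  have h1 : (algebraMap ℝ (Matrix V V ℝ)) μ = μ • (1 : Matrix V V ℝ) := by
    simp [Algebra.algebraMap_eq_smul_one]
  rw [h1, Matrix.sub_mulVec, Matrix.smul_mulVec, Matrix.one_mulVec, sub_eq_zero] at hv
  exact hv.symm

lemma mem_spectrum_of_eigen {V : Type*} [Fintype V] [DecidableEq V]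
    (A : Matrix V V ℝ) (μ : ℝ) (v : V → ℝ) (hv0 : v ≠ 0) (hv : A.mulVec v = μ • v) :
    μ ∈ spectrum ℝ A := by
  rw [spectrum.mem_iff, Matrix.isUnit_iff_isUnit_det, isUnit_iff_ne_zero, not_ne_iff]
  rw [← Matrix.exists_mulVec_eq_zero_iff]
  refine ⟨v, hv0, ?_⟩
  have h1 : (algebraMap ℝ (Matrix V V ℝ)) μ = μ • (1 : Matrix V V ℝ) := by
    simp [Algebra.algebraMap_eq_smul_one]
  rw [h1, Matrix.sub_mulVec, Matrix.smul_mulVec, Matrix.one_mulVec, hv, sub_self]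

lemma spec_le_of_subinv {V : Type*} [Fintype V] [DecidableEq V] [Nonempty V]
    (A : Matrix V V ℝ) (h0 : ∀ i j, 0 ≤ A i j) (w : V → ℝ) (hw : ∀ i, 0 < w i)
    (lam : ℝ) (hrow : ∀ i, ∑ j, A i j * w j ≤ lam * w i) :
    ∀ μ ∈ spectrum ℝ A, μ ≤ lam := by
  intro μ hμ
  obtain ⟨v, hv0, hv⟩ := eigen_of_mem_spectrum A μ hμ
  obtain ⟨i0, -, hmax⟩ := Finset.exists_max_image Finset.univ (fun i => |v i| / w i)
    ⟨Classical.arbitrary V, Finset.mem_univ _⟩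
  set r := |v i0| / w i0 with hr
  have hmax' : ∀ j, |v j| ≤ r * w j := by
    intro j
    have := hmax j (Finset.mem_univ j)
    calc |v j| = (|v j| / w j) * w j := by rw [div_mul_cancel₀ _ (ne_of_gt (hw j))]
    _ ≤ r * w j := by
      apply mul_le_mul_of_nonneg_right this (le_of_lt (hw j))
  have hrpos : 0 < r := by
    obtain ⟨j, hj⟩ : ∃ j, v j ≠ 0 := by
      by_contra h
      push_neg at h
      exact hv0 (funext h)
    have h1 : 0 < |v j| / w j := div_pos (abs_pos.mpr hj) (hw j)
    exact lt_of_lt_of_le h1 (hmax j (Finset.mem_univ j))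
  have hvi0 : |v i0| = r * w i0 := by rw [hr, div_mul_cancel₀ _ (ne_of_gt (hw i0))]
  have key : |μ| * |v i0| ≤ lam * |v i0| := by
    have e1 : |μ| * |v i0| = |(A.mulVec v) i0| := by
      rw [hv]; simp [abs_mul]
    have e2 : |(A.mulVec v) i0| ≤ ∑ j, A i0 j * |v j| := by
      rw [Matrix.mulVec, dotProduct]
      refine (Finset.abs_sum_le_sum_abs _ _).trans ?_
      refine Finset.sum_le_sum fun j _ => ?_
      rw [abs_mul, abs_of_nonneg (h0 i0 j)]
    have e3 : ∑ j, A i0 j * |v j| ≤ ∑ j, A i0 j * (r * w j) :=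
      Finset.sum_le_sum fun j _ => mul_le_mul_of_nonneg_left (hmax' j) (h0 i0 j)
    have e4 : ∑ j, A i0 j * (r * w j) = r * ∑ j, A i0 j * w j := by
      rw [Finset.mul_sum]; congr 1; funext j; ring
    have e5 : r * ∑ j, A i0 j * w j ≤ r * (lam * w i0) :=
      mul_le_mul_of_nonneg_left (hrow i0) (le_of_lt hrpos)
    calc |μ| * |v i0| = |(A.mulVec v) i0| := e1
    _ ≤ ∑ j, A i0 j * |v j| := e2
    _ ≤ ∑ j, A i0 j * (r * w j) := e3
    _ = r * ∑ j, A i0 j * w j := e4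
    _ ≤ r * (lam * w i0) := e5
    _ = lam * |v i0| := by rw [hvi0]; ring
  have hvi0pos : 0 < |v i0| := by rw [hvi0]; exact mul_pos hrpos (hw i0)
  calc μ ≤ |μ| := le_abs_self μ
  _ ≤ lam := (mul_le_mul_iff_of_pos_right hvi0pos).mp key

lemma specRad_le_of {V : Type*} [Fintype V] [DecidableEq V] [Nonempty V]
    (G : SimpleGraph V) [DecidableRel G.Adj] (w : V → ℝ) (hw : ∀ i, 0 < w i)
    (lam : ℝ) (hlam : 0 ≤ lam)
    (hrow : ∀ i, ∑ j, G.adjMatrix ℝ i j * w j ≤ lam * w i) :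
    specRad G ≤ lam := by
  rw [specRad_eq']
  exact Real.sSup_le
    (fun μ hμ => spec_le_of_subinv _ (adjMatrix_nonneg G) w hw lam hrow μ hμ) hlam

lemma le_specRad_of {V : Type*} [Fintype V] [DecidableEq V] [Nonempty V]
    (G : SimpleGraph V) [DecidableRel G.Adj] (v : V → ℝ) (hv0 : v ≠ 0) (lam : ℝ)
    (hrow : ∀ i, ∑ j, G.adjMatrix ℝ i j * v j = lam * v i) :
    lam ≤ specRad G := by
  rw [specRad_eq']
  have hmem : lam ∈ spectrum ℝ (G.adjMatrix ℝ) := by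
    apply mem_spectrum_of_eigen _ _ v hv0
    funext i
    simpa [Matrix.mulVec, dotProduct] using hrow i
  have hbdd : BddAbove (spectrum ℝ (G.adjMatrix ℝ)) := by
    refine ⟨(Fintype.card V : ℝ), fun μ hμ => ?_⟩
    refine spec_le_of_subinv _ (adjMatrix_nonneg G) (fun _ => 1) (fun _ => one_pos) _ ?_ μ hμ
    intro i
    calc ∑ j, G.adjMatrix ℝ i j * 1 ≤ ∑ _j : V, 1 :=
          Finset.sum_le_sum fun j _ => by
            rw [mul_one]; exact adjMatrix_le_one G i j
    _ = (Fintype.card V : ℝ) * 1 := by simp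
  exact le_csSup hbdd hmem

section rows
variable (s m t : ℕ)

lemma adj_inl_inl (k k' : Fin s) : (gJoin s m t 1).Adj (Sum.inl k) (Sum.inl k') ↔ k ≠ k' := by
  constructor
  · rintro ⟨h, -⟩ rfl; exact h rfl
  · intro h; exact ⟨by simpa using h, fun a b hab => by simp at hab⟩

lemma adj_inl_inr (k : Fin s) (q) : (gJoin s m t 1).Adj (Sum.inl k) (Sum.inr q) :=
  ⟨by simp, fun a b hab => by simp at hab⟩

lemma adj_inr_inl (k : Fin s) (q) : (gJoin s m t 1).Adj (Sum.inr q) (Sum.inl k) :=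
  ((gJoin s m t 1).adj_symm (adj_inl_inr s m t k q))

lemma adj_inr_inr (q q') : (gJoin s m t 1).Adj (Sum.inr q) (Sum.inr q') ↔ q ≠ q' ∧ q.1 = q'.1 := by
  constructor
  · rintro ⟨h, h2⟩
    exact ⟨fun hq => h (by rw [hq]), h2 q q' rfl rfl⟩
  · rintro ⟨h1, h2⟩
    exact ⟨by simpa using h1, fun a b ha hb => by
      cases Sum.inr_injective ha; cases Sum.inr_injective hb; exact h2⟩

variable [DecidableRel (gJoin s m t 1).Adj]

def wv (a b c : ℝ) : (Fin s ⊕ (Σ i : Fin (t+1), Fin ((Fin.cons m fun _ => 1 : Fin (t+1) → ℕ) i))) → ℝ :=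
  Sum.elim (fun _ => a) (fun q => if q.1 = 0 then b else c)

lemma row_inl (a b c : ℝ) (k : Fin s) :
    ∑ j, (gJoin s m t 1).adjMatrix ℝ (Sum.inl k) j * wv s m t a b c j
      = ((s:ℝ)*a - a) + (m*b + t*c) := by
  rw [Fintype.sum_sum_type]
  congr 1
  · have : ∀ k' : Fin s, (gJoin s m t 1).adjMatrix ℝ (Sum.inl k) (Sum.inl k') * wv s m t a b c (Sum.inl k')
        = a - (if k' = k then a else 0) := by
      intro k'
      rw [SimpleGraph.adjMatrix_apply]
      by_cases h : k' = k
      · subst h; simp [adj_inl_inl, wv]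
      · have : (gJoin s m t 1).Adj (Sum.inl k) (Sum.inl k') := (adj_inl_inl s m t k k').mpr (Ne.symm h)
        simp [this, wv, h]
    rw [Finset.sum_congr rfl (fun k' _ => this k')]
    rw [Finset.sum_sub_distrib, Finset.sum_const, Finset.sum_ite_eq' Finset.univ k (fun _ => a)]
    simp [mul_comm]
  · have : ∀ q, (gJoin s m t 1).adjMatrix ℝ (Sum.inl k) (Sum.inr q) * wv s m t a b c (Sum.inr q)
        = if q.1 = 0 then b else c := by
      intro q
      rw [SimpleGraph.adjMatrix_apply]
      simp [adj_inl_inr, wv]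
    rw [Finset.sum_congr rfl (fun q _ => this q)]
    rw [← Finset.univ_sigma_univ, Finset.sum_sigma]
    rw [Fin.sum_univ_succ]
    simp [Fin.cons_zero, Fin.cons_succ, Fin.succ_ne_zero, Finset.sum_const,
      Fintype.card_fin, smul_eq_mul, mul_comm]

lemma row_inr0 (a b c : ℝ) (k : Fin ((Fin.cons m fun _ => 1 : Fin (t+1) → ℕ) 0)) :
    ∑ j, (gJoin s m t 1).adjMatrix ℝ (Sum.inr ⟨0, k⟩) j * wv s m t a b c j
      = (s:ℝ)*a + ((m:ℝ)*b - b) := by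
  rw [Fintype.sum_sum_type]
  congr 1
  · have : ∀ k' : Fin s, (gJoin s m t 1).adjMatrix ℝ (Sum.inr ⟨0, k⟩) (Sum.inl k') * wv s m t a b c (Sum.inl k') = a := by
      intro k'
      rw [SimpleGraph.adjMatrix_apply]
      simp [adj_inr_inl, wv]
    rw [Finset.sum_congr rfl (fun k' _ => this k')]
    simp [mul_comm]
  · have : ∀ q, (gJoin s m t 1).adjMatrix ℝ (Sum.inr ⟨0, k⟩) (Sum.inr q) * wv s m t a b c (Sum.inr q)
        = if q = ⟨0, k⟩ then 0 else (if q.1 = 0 then b else 0) := by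
      intro q
      rw [SimpleGraph.adjMatrix_apply]
      by_cases h : q = (⟨0, k⟩ : Σ i : Fin (t+1), Fin ((Fin.cons m fun _ => 1 : Fin (t+1) → ℕ) i))
      · subst h; simp [SimpleGraph.irrefl]
      · by_cases h2 : q.1 = 0
        · have hadj : (gJoin s m t 1).Adj (Sum.inr ⟨0, k⟩) (Sum.inr q) :=
            (adj_inr_inr s m t _ _).mpr ⟨fun hq => h hq.symm, h2.symm⟩
          simp [hadj, wv, h, h2]
        · have hadj : ¬ (gJoin s m t 1).Adj (Sum.inr ⟨0, k⟩) (Sum.inr q) := by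
            rw [adj_inr_inr]
            rintro ⟨-, hq⟩
            exact h2 hq.symm
          simp [hadj, wv, h, h2]
    rw [Finset.sum_congr rfl (fun q _ => this q)]
    rw [← Finset.univ_sigma_univ, Finset.sum_sigma]
    rw [Fin.sum_univ_succ]
    have hsucc : ∀ (i : Fin t) (k' : Fin ((Fin.cons m fun _ => 1 : Fin (t+1) → ℕ) i.succ)),
        (if (⟨i.succ, k'⟩ : Σ i : Fin (t+1), Fin ((Fin.cons m fun _ => 1 : Fin (t+1) → ℕ) i)) = ⟨0, k⟩ then (0:ℝ)
          else (if (⟨i.succ, k'⟩ : Σ i : Fin (t+1), Fin _).1 = 0 then b else 0)) = 0 := by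
      intro i k'
      have h1 : (⟨i.succ, k'⟩ : Σ i : Fin (t+1), Fin ((Fin.cons m fun _ => 1 : Fin (t+1) → ℕ) i)) ≠ ⟨0, k⟩ := by
        intro h; exact Fin.succ_ne_zero i (congrArg Sigma.fst h)
      simp [h1, Fin.succ_ne_zero]
    have h0 : ∀ k' : Fin ((Fin.cons m fun _ => 1 : Fin (t+1) → ℕ) 0),
        (if (⟨0, k'⟩ : Σ i : Fin (t+1), Fin ((Fin.cons m fun _ => 1 : Fin (t+1) → ℕ) i)) = ⟨0, k⟩ then (0:ℝ)
          else (if ((0:Fin (t+1))) = 0 then b else 0)) = b - (if k' = k then b else 0) := by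
      intro k'
      by_cases h : k' = k
      · subst h; simp
      · have : (⟨0, k'⟩ : Σ i : Fin (t+1), Fin ((Fin.cons m fun _ => 1 : Fin (t+1) → ℕ) i)) ≠ ⟨0, k⟩ := by
          simp [Sigma.mk.inj_iff, h]
        simp [this, h]
    rw [Finset.sum_congr rfl (fun k' _ => h0 k')]
    rw [Finset.sum_congr rfl (fun i _ => Finset.sum_congr rfl (fun k' _ => hsucc i k'))]
    rw [Finset.sum_sub_distrib, Finset.sum_const, Finset.sum_ite_eq' Finset.univ k (fun _ => b)]
    simp [mul_comm, Fin.cons_zero]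

lemma row_inrpos (a b c : ℝ) (i : Fin t) (k : Fin ((Fin.cons m fun _ => 1 : Fin (t+1) → ℕ) i.succ)) :
    ∑ j, (gJoin s m t 1).adjMatrix ℝ (Sum.inr ⟨i.succ, k⟩) j * wv s m t a b c j
      = (s:ℝ)*a := by
  rw [Fintype.sum_sum_type]
  have h2 : ∀ q, (gJoin s m t 1).adjMatrix ℝ (Sum.inr ⟨i.succ, k⟩) (Sum.inr q) * wv s m t a b c (Sum.inr q) = 0 := by
    intro q
    rw [SimpleGraph.adjMatrix_apply]
    have hadj : ¬ (gJoin s m t 1).Adj (Sum.inr ⟨i.succ, k⟩) (Sum.inr q) := by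
      rw [adj_inr_inr]
      rintro ⟨hne, hfst⟩
      obtain ⟨i', k'⟩ := q
      obtain rfl : i' = i.succ := hfst.symm
      have : k' = k := by
        apply Fin.ext
        have h1 := k'.2
        have h2 := k.2
        simp only [Fin.cons_succ] at h1 h2
        omega
      subst this
      exact hne rfl
    simp [hadj]
  rw [Finset.sum_congr rfl (fun q _ => h2 q)]
  have h1 : ∀ k' : Fin s, (gJoin s m t 1).adjMatrix ℝ (Sum.inr ⟨i.succ, k⟩) (Sum.inl k') * wv s m t a b c (Sum.inl k') = a := by
    intro k'
    rw [SimpleGraph.adjMatrix_apply]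
    simp [adj_inr_inl, wv]
  rw [Finset.sum_congr rfl (fun k' _ => h1 k')]
  simp [mul_comm]

end rows

def phiR (S M T x : ℝ) : ℝ := x*(x-S+1)*(x-M+1) - M*S*x - T*S*(x-M+1)

lemma phiR_cont (S M T : ℝ) : Continuous (phiR S M T) := by
  unfold phiR; fun_prop

section numeric
variable {d nn ss : ℝ} (hd : 3 ≤ d) (hn : 2*d^2 ≤ nn) (hs1 : d+1 ≤ ss)
  (hs2 : (d-1)*ss ≤ nn - 2)

lemma lem_phid_x0 : phiR d (nn - d*(d-1) - 1) (d*(d-2)+1) (nn - d*(d-2) - 2)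
    = -((d*(d-2)+1)*d^2) := by
  unfold phiR; ring

include hd hn in
lemma lem_phid_nn : 0 < phiR d (nn - d*(d-1) - 1) (d*(d-2)+1) nn := by
  have hN : 0 ≤ nn - 2*d^2 := by linarith
  have he : 0 ≤ d - 3 := by linarith
  set N := nn - 2*d^2 with hNdef
  set e := d - 3 with hedef
  have key : phiR d (nn - d*(d-1) - 1) (d*(d-2)+1) nn
      = (N^2*e^2) + 4*(N^2*e) + 5*N^2 + 4*(N*e^4) + 40*(N*e^3) + 153*(N*e^2)
        + 268*(N*e) + 185*N + 4*e^6 + 63*e^5 + 418*e^4 + 1497*e^3 + 3060*e^2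
        + 3400*e + 1614 := by
    unfold phiR
    rw [hNdef, hedef]
    ring
  rw [key]
  have h1 : 0 ≤ N^2*e^2 := mul_nonneg (sq_nonneg N) (sq_nonneg e)
  have h2 : 0 ≤ N^2*e := mul_nonneg (sq_nonneg N) he
  have h3 : 0 ≤ N*e^4 := mul_nonneg hN (pow_nonneg he 4)
  have h4 : 0 ≤ N*e^3 := mul_nonneg hN (pow_nonneg he 3)
  have h5 : 0 ≤ N*e^2 := mul_nonneg hN (sq_nonneg e)
  have h6 : 0 ≤ N*e := mul_nonneg hN he
  have h7 : 0 ≤ e^6 := pow_nonneg he 6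
  have h8 : 0 ≤ e^5 := pow_nonneg he 5
  have h9 : 0 ≤ e^4 := pow_nonneg he 4
  have h10 : 0 ≤ e^3 := pow_nonneg he 3
  nlinarith [sq_nonneg N, sq_nonneg e]

def QR (d nn ss x : ℝ) : ℝ :=
  (d-2)*x^2 - x*(d^2+d*ss-3*d-2*ss+3) + nn*(d^2+d*ss-2*d-2*ss+1)
    - d^4 - d^3*ss + 3*d^3 - d^2*ss^2 + 3*d^2*ss - 5*d^2 + 3*d*ss^2 - 5*d*ss + 5*d
    - 2*ss^2 + 5*ss - 2

include hd hn hs1 hs2 in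
lemma lem_Qp : 0 ≤ 2*(d-2)*(nn - d*(d-2) - 2) - (d^2+d*ss-3*d-2*ss+3) := by
  have hss0 : (0:ℝ) ≤ ss := by linarith
  have h1 : ss*(d-2) ≤ nn - 2 := by nlinarith
  have h3 : 2*d^2*(2*d-5) ≤ nn*(2*d-5) := mul_le_mul_of_nonneg_right hn (by linarith)
  have he : (0:ℝ) ≤ d - 3 := by linarith
  nlinarith [mul_nonneg he he, mul_nonneg (mul_nonneg he he) he]

include hd hn hs1 hs2 in
lemma lem_Qx0 : 0 < QR d nn ss (nn - d*(d-2) - 2) := by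
  have he : (0:ℝ) ≤ d - 3 := by linarith
  have hN : (0:ℝ) ≤ nn - 2*d^2 := by linarith
  have hR : (0:ℝ) < nn^2*d^2 - 4*nn^2*d + 4*nn^2 - 2*nn*d^4 + 10*nn*d^3 - 20*nn*d^2
      + 22*nn*d - 13*nn + d^6 - 7*d^5 + 20*d^4 - 32*d^3 + 33*d^2 - 23*d + 10 := by
    set N := nn - 2*d^2 with hNdef
    set e := d - 3 with hedef
    have key : nn^2*d^2 - 4*nn^2*d + 4*nn^2 - 2*nn*d^4 + 10*nn*d^3 - 20*nn*d^2
        + 22*nn*d - 13*nn + d^6 - 7*d^5 + 20*d^4 - 32*d^3 + 33*d^2 - 23*d + 10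
        = (N^2*e^2) + 2*(N^2*e) + N^2 + 2*(N*e^4) + 18*(N*e^3) + 50*(N*e^2)
          + 52*(N*e) + 17*N + e^6 + 15*e^5 + 86*e^4 + 234*e^3 + 304*e^2 + 154*e + 4 := by
      rw [hNdef, hedef]; ring
    rw [key]
    have h1 : 0 ≤ N^2*e^2 := mul_nonneg (sq_nonneg N) (sq_nonneg e)
    have h2 : 0 ≤ N^2*e := mul_nonneg (sq_nonneg N) he
    have h3 : 0 ≤ N*e^4 := mul_nonneg hN (pow_nonneg he 4)
    have h4 : 0 ≤ N*e^3 := mul_nonneg hN (pow_nonneg he 3)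
    have h5 : 0 ≤ N*e^2 := mul_nonneg hN (sq_nonneg e)
    have h6 : 0 ≤ N*e := mul_nonneg hN he
    nlinarith [sq_nonneg N, sq_nonneg e, pow_nonneg he 6, pow_nonneg he 5,
      pow_nonneg he 4, pow_nonneg he 3]
  have hss0 : (0:ℝ) ≤ ss := by linarith
  have hsd0 : 0 ≤ (d-1)*ss := mul_nonneg (by linarith) hss0
  have hsd : 0 ≤ (nn-2) - (d-1)*ss := by linarith
  have h1 : 0 ≤ (d-2)*((nn-2)^2 - ((d-1)*ss)^2) :=
    mul_nonneg (by linarith) (by nlinarith)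
  have h2 : 0 ≤ (d^2-d-1)*((nn-2)-(d-1)*ss) := mul_nonneg (by nlinarith) hsd
  have key : (d-1)*QR d nn ss (nn - d*(d-2) - 2)
      = (nn^2*d^2 - 4*nn^2*d + 4*nn^2 - 2*nn*d^4 + 10*nn*d^3 - 20*nn*d^2
        + 22*nn*d - 13*nn + d^6 - 7*d^5 + 20*d^4 - 32*d^3 + 33*d^2 - 23*d + 10)
        + (d-2)*((nn-2)^2 - ((d-1)*ss)^2) + (d^2-d-1)*((nn-2)-(d-1)*ss) := by
    unfold QR; ring
  have h4 : 0 < (d-1)*QR d nn ss (nn - d*(d-2) - 2) := by rw [key]; linarith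
  by_contra hcon
  push_neg at hcon
  nlinarith [h4]

end numeric


lemma le_specRad_gJoin (s m t : ℕ) (hs : 0 < s) (lam b c : ℝ)
    (h1 : ((s:ℝ)*1 - 1) + ((m:ℝ)*b + (t:ℝ)*c) = lam * 1)
    (h2 : (s:ℝ)*1 + ((m:ℝ)*b - b) = lam * b)
    (h3 : (s:ℝ)*1 = lam * c) :
    lam ≤ specRad (gJoin s m t 1) := by
  classical
  haveI : Nonempty (Fin s ⊕ (Σ i : Fin (t+1), Fin ((Fin.cons m fun _ => 1 : Fin (t+1) → ℕ) i))) :=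
    ⟨Sum.inl ⟨0, hs⟩⟩
  apply le_specRad_of (gJoin s m t 1) (wv s m t 1 b c) ?_ lam ?_
  · intro h
    have := congrFun h (Sum.inl ⟨0, hs⟩)
    simp [wv] at this
  · intro i
    rcases i with k | ⟨i0, k⟩
    · rw [row_inl]
      exact h1
    · revert k
      refine Fin.cases ?_ ?_ i0
      · intro k
        rw [row_inr0]
        have hwv : wv s m t 1 b c (Sum.inr ⟨0, k⟩) = b := by simp [wv]
        rw [hwv]
        exact h2
      · intro i k
        rw [row_inrpos]
        have hwv : wv s m t 1 b c (Sum.inr ⟨i.succ, k⟩) = c := by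
          simp [wv, Fin.succ_ne_zero]
        rw [hwv]
        exact h3

lemma specRad_gJoin_le (s m t : ℕ) (hs : 0 < s) (lam b c : ℝ)
    (hb : 0 < b) (hc : 0 < c) (hlam : 0 ≤ lam)
    (h1 : ((s:ℝ)*1 - 1) + ((m:ℝ)*b + (t:ℝ)*c) ≤ lam * 1)
    (h2 : (s:ℝ)*1 + ((m:ℝ)*b - b) ≤ lam * b)
    (h3 : (s:ℝ)*1 ≤ lam * c) :
    specRad (gJoin s m t 1) ≤ lam := by
  classical
  haveI : Nonempty (Fin s ⊕ (Σ i : Fin (t+1), Fin ((Fin.cons m fun _ => 1 : Fin (t+1) → ℕ) i))) :=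
    ⟨Sum.inl ⟨0, hs⟩⟩
  apply specRad_le_of (gJoin s m t 1) (wv s m t 1 b c) ?_ lam hlam ?_
  · intro i
    rcases i with k | ⟨i0, k⟩
    · show (0:ℝ) < 1; norm_num
    · show (0:ℝ) < if (⟨i0, k⟩ : Σ i : Fin (t+1), Fin _).1 = 0 then b else c
      split <;> assumption
  · intro i
    rcases i with k | ⟨i0, k⟩
    · rw [row_inl]
      exact h1
    · revert k
      refine Fin.cases ?_ ?_ i0
      · intro k
        rw [row_inr0]
        have hwv : wv s m t 1 b c (Sum.inr ⟨0, k⟩) = b := by simp [wv]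
        rw [hwv]
        exact h2
      · intro i k
        rw [row_inrpos]
        have hwv : wv s m t 1 b c (Sum.inr ⟨i.succ, k⟩) = c := by
          simp [wv, Fin.succ_ne_zero]
        rw [hwv]
        exact h3

lemma rows_aux (a M lam : ℝ) (hlam : lam ≠ 0) (hden : lam - M + 1 ≠ 0) :
    (a*1 + (M*(a/(lam - M + 1)) - a/(lam - M + 1)) = lam * (a/(lam - M + 1))) ∧
    (a*1 = lam * (a/lam)) := by
  constructor
  · field_simp
    ring
  · field_simp

lemma rows_eq (a M T lam : ℝ) (hlam : 0 < lam) (hden : 0 < lam - M + 1)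
    (hφ : phiR a M T lam = 0) :
    ((a*1 - 1) + (M*(a/(lam - M + 1)) + T*(a/lam)) = lam * 1) := by
  have hz : ((a*1 - 1) + (M*(a/(lam - M + 1)) + T*(a/lam)) - lam*1) * (lam*(lam - M + 1))
      = -(phiR a M T lam) := by
    unfold phiR
    field_simp
    ring
  rw [hφ, neg_zero] at hz
  have hne : lam*(lam - M + 1) ≠ 0 := mul_ne_zero (ne_of_gt hlam) (ne_of_gt hden)
  have h0 := (mul_eq_zero.mp hz).resolve_right hne
  linarith [h0]

lemma rows_le (a M T lam : ℝ) (hlam : 0 < lam) (hden : 0 < lam - M + 1)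
    (hφ : 0 < phiR a M T lam) :
    ((a*1 - 1) + (M*(a/(lam - M + 1)) + T*(a/lam)) ≤ lam * 1) := by
  have hz : (lam*1 - ((a*1 - 1) + (M*(a/(lam - M + 1)) + T*(a/lam)))) * (lam*(lam - M + 1))
      = phiR a M T lam := by
    unfold phiR
    field_simp
    ring
  have hprod : 0 < lam*(lam - M + 1) := mul_pos hlam hden
  by_contra hcon
  push_neg at hcon
  nlinarith [hz, hφ, hprod]

lemma real_core (d nn ss : ℝ) (hd : 3 ≤ d) (hn : 2*d^2 ≤ nn) (hs1 : d+1 ≤ ss)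
    (hs2 : (d-1)*ss ≤ nn - 2) :
    ∃ lam' Λ bδ cδ bs cs : ℝ,
      lam' < Λ ∧ 0 < bs ∧ 0 < cs ∧ 0 ≤ lam' ∧
      (((d:ℝ)*1 - 1) + ((nn - d*(d-1) - 1)*bδ + (d*(d-2)+1)*cδ) = Λ * 1) ∧
      (d*1 + ((nn - d*(d-1) - 1)*bδ - bδ) = Λ * bδ) ∧
      (d*1 = Λ * cδ) ∧
      ((ss*1 - 1) + ((nn - (d-1)*ss - 1)*bs + ((d-2)*ss+1)*cs) ≤ lam' * 1) ∧
      (ss*1 + ((nn - (d-1)*ss - 1)*bs - bs) ≤ lam' * bs) ∧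
      (ss*1 ≤ lam' * cs) := by
  have hx0pos : (0:ℝ) < nn - d*(d-2) - 2 := by nlinarith
  have hx0nn : nn - d*(d-2) - 2 ≤ nn := by nlinarith
  have hφx0neg : phiR d (nn - d*(d-1) - 1) (d*(d-2)+1) (nn - d*(d-2) - 2) < 0 := by
    rw [lem_phid_x0]; nlinarith
  obtain ⟨Λ, hΛIcc, hΛroot⟩ :
      ∃ Λ, Λ ∈ Set.Icc (nn - d*(d-2) - 2) nn ∧ phiR d (nn - d*(d-1) - 1) (d*(d-2)+1) Λ = 0 := by
    have hsub := intermediate_value_Icc hx0nn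
      ((phiR_cont d (nn - d*(d-1) - 1) (d*(d-2)+1)).continuousOn)
    have hmem : (0:ℝ) ∈ Set.Icc (phiR d (nn - d*(d-1) - 1) (d*(d-2)+1) (nn - d*(d-2) - 2))
        (phiR d (nn - d*(d-1) - 1) (d*(d-2)+1) nn) :=
      ⟨le_of_lt hφx0neg, le_of_lt (lem_phid_nn hd hn)⟩
    obtain ⟨Λ, hΛ1, hΛ2⟩ := hsub hmem
    exact ⟨Λ, hΛ1, hΛ2⟩
  have hΛx0 : nn - d*(d-2) - 2 < Λ := by
    rcases eq_or_lt_of_le hΛIcc.1 with h | h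
    · exact absurd hΛroot (by rw [← h]; exact ne_of_lt hφx0neg)
    · exact h
  have hΛpos : 0 < Λ := lt_trans hx0pos hΛx0
  have hdenδ : 0 < Λ - (nn - d*(d-1) - 1) + 1 := by nlinarith
  have hδpos : (0:ℝ) < d := by linarith
  -- key positivity of φ_s at Λ
  have hQΛ : 0 < QR d nn ss Λ := by
    have h1 := lem_Qx0 hd hn hs1 hs2
    have h2 := lem_Qp hd hn hs1 hs2
    have key : QR d nn ss Λ = QR d nn ss (nn - d*(d-2) - 2)
        + (Λ - (nn - d*(d-2) - 2))*((2*(d-2)*(nn - d*(d-2) - 2) - (d^2+d*ss-3*d-2*ss+3))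
          + (d-2)*(Λ-(nn - d*(d-2) - 2))) := by
      unfold QR; ring
    have h3 : (0:ℝ) ≤ (Λ - (nn - d*(d-2) - 2)) := by linarith
    have h4 : (0:ℝ) ≤ (d-2)*(Λ-(nn - d*(d-2) - 2)) := mul_nonneg (by linarith) h3
    nlinarith [mul_nonneg h3 h2, mul_nonneg h3 h4]
  have hφsΛ : 0 < phiR ss (nn - (d-1)*ss - 1) ((d-2)*ss+1) Λ := by
    have key : phiR ss (nn - (d-1)*ss - 1) ((d-2)*ss+1) Λ
        = phiR d (nn - d*(d-1) - 1) (d*(d-2)+1) Λ + (ss - d)*QR d nn ss Λ := by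
      unfold phiR QR; ring
    rw [key, hΛroot]
    have h5 : 0 < ss - d := by linarith
    nlinarith [mul_pos h5 hQΛ]
  -- pick lam' < Λ still good
  have hU : IsOpen {y : ℝ | nn - d*(d-2) - 2 < y ∧ 0 < phiR ss (nn - (d-1)*ss - 1) ((d-2)*ss+1) y} :=
    (isOpen_lt continuous_const continuous_id).inter
      (isOpen_lt continuous_const (phiR_cont _ _ _))
  obtain ⟨r, hr0, hball⟩ := Metric.isOpen_iff.mp hU Λ ⟨hΛx0, hφsΛ⟩
  have hlam'mem : Λ - r/2 ∈ {y : ℝ | nn - d*(d-2) - 2 < y ∧ 0 < phiR ss (nn - (d-1)*ss - 1) ((d-2)*ss+1) y} := by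
    apply hball
    rw [Metric.mem_ball, Real.dist_eq]
    rw [show Λ - r/2 - Λ = -(r/2) by ring, abs_neg, abs_of_nonneg (by linarith)]
    linarith
  obtain ⟨hlam'x0, hφlam'⟩ := hlam'mem
  have hlam'lt : Λ - r/2 < Λ := by linarith
  have hlam'pos : 0 < Λ - r/2 := lt_trans hx0pos hlam'x0
  have hMslt : nn - (d-1)*ss - 1 - 1 < Λ - r/2 := by nlinarith
  have hdens : 0 < (Λ - r/2) - (nn - (d-1)*ss - 1) + 1 := by linarith
  have hsspos : (0:ℝ) < ss := by linarith
  have hδne : (0:ℝ) < d := hδpos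
  have hrows1 := rows_aux d (nn - d*(d-1) - 1) Λ (ne_of_gt hΛpos) (ne_of_gt hdenδ)
  have hrows2 := rows_eq d (nn - d*(d-1) - 1) (d*(d-2)+1) Λ hΛpos hdenδ hΛroot
  have hrows3 := rows_aux ss (nn - (d-1)*ss - 1) (Λ - r/2) (ne_of_gt hlam'pos) (ne_of_gt hdens)
  have hrows4 := rows_le ss (nn - (d-1)*ss - 1) ((d-2)*ss+1) (Λ - r/2) hlam'pos hdens hφlam'
  exact ⟨Λ - r/2, Λ, d / (Λ - (nn - d*(d-1) - 1) + 1), d / Λ,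
    ss / ((Λ - r/2) - (nn - (d-1)*ss - 1) + 1), ss / (Λ - r/2),
    hlam'lt, div_pos hsspos hdens, div_pos hsspos hlam'pos, le_of_lt hlam'pos,
    hrows2, hrows1.1, hrows1.2, hrows4, le_of_eq hrows3.1, le_of_eq hrows3.2⟩

/-- Let `δ ≥ 3`, `n ≥ 2δ²` and `s` be integers with `δ + 1 ≤ s ≤ (n−2)/(δ−1)`.  Then
`ρ(K_s ∨ (K_{n−(δ−1)s−1} ∪ ((δ−2)s+1)K_1)) <
  ρ(K_δ ∨ (K_{n−δ(δ−1)−1} ∪ (δ(δ−2)+1)K_1))`. -/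
theorem stmt_10 (δ n s : ℕ) (hδ : 3 ≤ δ) (hn : 2 * δ ^ 2 ≤ n)
    (hs₁ : δ + 1 ≤ s) (hs₂ : (s : ℝ) ≤ ((n : ℝ) - 2) / ((δ : ℝ) - 1)) :
    specRad (gJoin s (n - (δ - 1) * s - 1) ((δ - 2) * s + 1) 1) <
      specRad (gJoin δ (n - δ * (δ - 1) - 1) (δ * (δ - 2) + 1) 1) := by
  have hd : (3:ℝ) ≤ (δ:ℝ) := by exact_mod_cast hδ
  have hnr : 2*(δ:ℝ)^2 ≤ (n:ℝ) := by exact_mod_cast hn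
  have hs1 : (δ:ℝ)+1 ≤ (s:ℝ) := by exact_mod_cast hs₁
  have hs2 : ((δ:ℝ)-1)*(s:ℝ) ≤ (n:ℝ)-2 := by
    have hd1 : (0:ℝ) < (δ:ℝ)-1 := by linarith
    have h := (le_div_iff₀ hd1).mp hs₂
    linarith
  have hδ1 : ((δ - 1 : ℕ) : ℝ) = (δ:ℝ) - 1 := by
    have h1 : 1 ≤ δ := by omega
    push_cast [h1]; ring
  have hδ2 : ((δ - 2 : ℕ) : ℝ) = (δ:ℝ) - 2 := by
    have h1 : 2 ≤ δ := by omega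
    push_cast [h1]; ring
  have hnat1 : (δ-1)*s + 2 ≤ n := by
    have h2 : (((δ-1)*s + 2 : ℕ) : ℝ) ≤ (n : ℝ) := by push_cast [hδ1]; linarith
    exact_mod_cast h2
  have hnat2 : δ*(δ-1) + 2 ≤ n := by nlinarith [hδ, hn]
  have hMsr : ((n - (δ - 1) * s - 1 : ℕ) : ℝ) = (n:ℝ) - ((δ:ℝ)-1)*(s:ℝ) - 1 := by
    have h1 : n - (δ-1)*s - 1 = n - ((δ-1)*s + 1) := by omega
    rw [h1, Nat.cast_sub (by omega)]
    push_cast [hδ1]; ring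
  have hTsr : (((δ - 2) * s + 1 : ℕ) : ℝ) = ((δ:ℝ)-2)*(s:ℝ) + 1 := by
    push_cast [hδ2]; ring
  have hMδr : ((n - δ * (δ - 1) - 1 : ℕ) : ℝ) = (n:ℝ) - (δ:ℝ)*((δ:ℝ)-1) - 1 := by
    have h1 : n - δ*(δ-1) - 1 = n - (δ*(δ-1) + 1) := by omega
    rw [h1, Nat.cast_sub (by omega)]
    push_cast [hδ1]; ring
  have hTδr : ((δ * (δ - 2) + 1 : ℕ) : ℝ) = (δ:ℝ)*((δ:ℝ)-2) + 1 := by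
    push_cast [hδ2]; ring
  obtain ⟨lam', Λ, bδ, cδ, bs, cs, hlt, hbs, hcs, hlam0, e1, e2, e3, i1, i2, i3⟩ :=
    real_core (δ:ℝ) (n:ℝ) (s:ℝ) hd hnr hs1 hs2
  have hup : specRad (gJoin s (n - (δ - 1) * s - 1) ((δ - 2) * s + 1) 1) ≤ lam' := by
    refine specRad_gJoin_le _ _ _ (by omega) lam' bs cs hbs hcs hlam0 ?_ ?_ ?_
    · rw [hMsr, hTsr]; exact i1
    · rw [hMsr]; exact i2
    · exact i3
  have hlow : Λ ≤ specRad (gJoin δ (n - δ * (δ - 1) - 1) (δ * (δ - 2) + 1) 1) := by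
    refine le_specRad_gJoin _ _ _ (by omega) Λ bδ cδ ?_ ?_ ?_
    · rw [hMδr, hTδr]; exact e1
    · rw [hMδr]; exact e2
    · exact e3
  exact lt_of_le_of_lt hup (lt_of_lt_of_le hlt hlow)
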